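/- Let 𝒮 ⊂ ℝⁿ be a compact connected set of positive Lebesgue measure, and let T be a probability density on 𝒮 that is L-Lipschitz with respect to the ℓ¹-norm for some L ≥ 0. Let (𝒮_t)_{t=1}^{m} be a finite partition of 𝒮 into hyperrectangles of positive Lebesgue measure whose pairwise intersections have measure zero, let p be the discretization of T, and let δ̄ be the maximum side length of any cell 𝒮_t over all dimensions. Then KL(T‖U) ≤ KL_D(p‖pᵘ) + log(1 + (n/2) m L δ̄^{n+1}). -/

import Mathlib

open MeasureTheory Real Finset

noncomputable section

private lemma abs_refl_bound {a b s u : ℝ} (hs1 : a ≤ s) (hs2 : s ≤ b)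
    (hu1 : a ≤ u) (hu2 : u ≤ b) :
    |s - u| + |s - (a + b - u)| ≤ b - a := by
  rcases abs_cases (s - u) with ⟨h1, _⟩ | ⟨h1, _⟩ <;>
    rcases abs_cases (s - (a + b - u)) with ⟨h2, _⟩ | ⟨h2, _⟩ <;> linarith

private lemma reflection_integral {n : ℕ} (a b : Fin n → ℝ) (f : (Fin n → ℝ) → ℝ) :
    ∫ u in Set.Icc a b, f (a + b - u) = ∫ u in Set.Icc a b, f u := by
  have hmem : ∀ u : Fin n → ℝ, (a + b - u ∈ Set.Icc a b) ↔ u ∈ Set.Icc a b := by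
    intro u
    simp only [Set.mem_Icc, Pi.le_def, Pi.add_apply, Pi.sub_apply]
    constructor
    · rintro ⟨h1, h2⟩
      exact ⟨fun i => by linarith [h2 i], fun i => by linarith [h1 i]⟩
    · rintro ⟨h1, h2⟩
      exact ⟨fun i => by linarith [h2 i], fun i => by linarith [h1 i]⟩
  rw [← integral_indicator measurableSet_Icc, ← integral_indicator measurableSet_Icc]
  have heq : ∀ u, (Set.Icc a b).indicator (fun v => f (a + b - v)) u
      = (Set.Icc a b).indicator f (a + b - u) := by
    intro u
    by_cases h : u ∈ Set.Icc a b
    · rw [Set.indicator_of_mem h, Set.indicator_of_mem ((hmem u).2 h)]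
    · rw [Set.indicator_of_notMem h,
        Set.indicator_of_notMem (fun hh => h ((hmem u).1 hh))]
  simp_rw [heq]
  exact integral_sub_left_eq_self _ _ _

/-- global discretization difference bound:
`KL(T‖U) ≤ KL_D(p‖pᵘ) + log(1 + (n/2) m L δ̄^{n+1})`. -/
theorem discretization_difference_global_bound
    (n m : ℕ)
    (𝒮 : Set (Fin n → ℝ))
    (hcomp : IsCompact 𝒮) (hconn : IsConnected 𝒮) (hpos : 0 < volume 𝒮)
    (T : (Fin n → ℝ) → ℝ)
    (hTnonneg : ∀ s ∈ 𝒮, 0 ≤ T s)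
    (hTint : (∫ s in 𝒮, T s) = 1)
    -- T is L-Lipschitz w.r.t. the ℓ¹-norm
    (L : ℝ) (hL : 0 ≤ L)
    (hTLip : ∀ x ∈ 𝒮, ∀ y ∈ 𝒮, |T x - T y| ≤ L * ∑ j : Fin n, |x j - y j|)
    -- hyperrectangular partition of 𝒮
    (St : Fin m → Set (Fin n → ℝ))
    (α β : Fin m → Fin n → ℝ)
    (hSt : ∀ t, St t = Set.Icc (α t) (β t))
    (hStpos : ∀ t, 0 < volume (St t))
    (hcover : (⋃ t, St t) = 𝒮)
    (hdisj : ∀ t t', t ≠ t' → volume (St t ∩ St t') = 0)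
    -- maximum side length δ̄ over all cells and dimensions
    (δbar : ℝ)
    (hδbar₁ : ∀ t j, β t j - α t j ≤ δbar)
    (hδbar₂ : ∃ t j, β t j - α t j = δbar)
    -- discretization of T
    (p : Fin m → ℝ) (hp : ∀ t, p t = ∫ s in St t, T s) :
    (∫ s in 𝒮, T s * Real.log (T s * (volume 𝒮).toReal))
      ≤ (∑ t, p t * Real.log (p t * (volume 𝒮).toReal / (volume (St t)).toReal))
        + Real.log (1 + (n : ℝ) / 2 * (m : ℝ) * L * δbar ^ (n + 1)) := by
  have hfinS : volume 𝒮 ≠ ⊤ := hcomp.measure_lt_top.ne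
  set lamS : ℝ := (volume 𝒮).toReal with hlamSdef
  have hlamSpos : 0 < lamS := ENNReal.toReal_pos hpos.ne' hfinS
  have hsub : ∀ t, St t ⊆ 𝒮 := fun t => hcover ▸ Set.subset_iUnion St t
  have hδpos : ∀ t j, 0 < β t j - α t j := by
    intro t j
    by_contra h
    push_neg at h
    have hz : volume (St t) = 0 := by
      rw [hSt t, Real.volume_Icc_pi]
      exact Finset.prod_eq_zero (Finset.mem_univ j) (by simp [ENNReal.ofReal_eq_zero.2 h])
    exact absurd hz (hStpos t).ne'
  have hδbarpos : 0 < δbar := by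
    obtain ⟨t, j, h⟩ := hδbar₂; exact h ▸ hδpos t j
  have hcellmeas : ∀ t, MeasurableSet (St t) := fun t => (hSt t) ▸ measurableSet_Icc
  have hcellcomp : ∀ t, IsCompact (St t) := fun t => (hSt t) ▸ isCompact_Icc
  have hlamt : ∀ t, (volume (St t)).toReal = ∏ j, (β t j - α t j) := by
    intro t
    rw [hSt t, Real.volume_Icc_pi, ENNReal.toReal_prod]
    exact Finset.prod_congr rfl fun j _ => ENNReal.toReal_ofReal (hδpos t j).le
  have hlamtpos : ∀ t, 0 < (volume (St t)).toReal :=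
    fun t => ENNReal.toReal_pos (hStpos t).ne' ((hcellcomp t).measure_lt_top.ne)
  have hlamtle : ∀ t, (volume (St t)).toReal ≤ δbar ^ n := by
    intro t
    rw [hlamt t]
    calc ∏ j, (β t j - α t j) ≤ ∏ _j : Fin n, δbar :=
          Finset.prod_le_prod (fun j _ => (hδpos t j).le) (fun j _ => hδbar₁ t j)
      _ = δbar ^ n := by simp
  -- continuity and integrability
  have hTcont : ContinuousOn T 𝒮 := by
    have hlip : LipschitzOnWith (Real.toNNReal (L * n)) T 𝒮 := by
      apply LipschitzOnWith.of_dist_le_mul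
      intro x hx y hy
      rw [Real.dist_eq]
      calc |T x - T y| ≤ L * ∑ j : Fin n, |x j - y j| := hTLip x hx y hy
        _ ≤ L * ∑ _j : Fin n, dist x y := by
            gcongr with j hj
            exact (Real.dist_eq _ _) ▸ dist_le_pi_dist x y j
        _ = L * n * dist x y := by rw [Finset.sum_const]; simp; ring
        _ ≤ Real.toNNReal (L * n) * dist x y :=
            mul_le_mul_of_nonneg_right (Real.le_coe_toNNReal _) dist_nonneg
    exact hlip.continuousOn
  have hgcont : Continuous (fun x : ℝ => x * Real.log (x * lamS)) := by
    have h1 : Continuous (fun x : ℝ => (x * lamS) * Real.log (x * lamS)) :=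
      Real.continuous_mul_log.comp (continuous_id.mul continuous_const)
    have heq : (fun x : ℝ => x * Real.log (x * lamS))
        = fun x => ((x * lamS) * Real.log (x * lamS)) / lamS := by
      funext x
      field_simp
    rw [heq]
    exact h1.div_const _
  have hTintS : IntegrableOn T 𝒮 := hTcont.integrableOn_compact hcomp
  have hTlogint : IntegrableOn (fun s => T s * Real.log (T s * lamS)) 𝒮 :=
    (hgcont.comp_continuousOn hTcont).integrableOn_compact hcomp
  have hTintcell : ∀ t, IntegrableOn T (St t) := fun t => hTintS.mono_set (hsub t)
  have hpnn : ∀ t, 0 ≤ p t := fun t => (hp t) ▸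
    setIntegral_nonneg (hcellmeas t) (fun s hs => hTnonneg s (hsub t hs))
  -- splitting integrals over the partition
  have hNM : ∀ t, NullMeasurableSet (St t) volume :=
    fun t => (hcellmeas t).nullMeasurableSet
  have hAED : Pairwise (Function.onFun (AEDisjoint volume) St) := fun t t' htt' => hdisj t t' htt'
  have hsplit : ∀ f : (Fin n → ℝ) → ℝ, IntegrableOn f 𝒮 →
      ∫ s in 𝒮, f s = ∑ t, ∫ s in St t, f s := by
    intro f hf
    rw [← hcover] at hf ⊢
    rw [integral_iUnion_ae hNM hAED hf, tsum_fintype]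
  have hsump : ∑ t, p t = 1 := by
    rw [← hTint, hsplit T hTintS]
    exact Finset.sum_congr rfl fun t _ => hp t
  -- the key per-cell sup bound
  set a' : ℝ := (n : ℝ) / 2 * L * δbar ^ (n + 1) with ha'def
  have ha'nn : 0 ≤ a' := by positivity
  have key : ∀ t, ∀ s ∈ St t, T s * (volume (St t)).toReal ≤ p t + a' := by
    intro t s hs
    set c : Fin n → ℝ := α t + β t with hcdef
    have hrefl_mem : ∀ u ∈ St t, c - u ∈ St t := by
      intro u hu
      rw [hSt t] at hu ⊢
      obtain ⟨h1, h2⟩ := hu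
      constructor
      · intro j
        have := h1 j; have := h2 j
        simp only [hcdef, Pi.sub_apply, Pi.add_apply]
        linarith
      · intro j
        have := h1 j; have := h2 j
        simp only [hcdef, Pi.sub_apply, Pi.add_apply]
        linarith
    have hs𝒮 : s ∈ 𝒮 := hsub t hs
    -- pointwise bound
    have hpw : ∀ u ∈ St t, 2 * T s - T u - T (c - u)
        ≤ L * ∑ j, (β t j - α t j) := by
      intro u hu
      have hu𝒮 : u ∈ 𝒮 := hsub t hu
      have hu'𝒮 : c - u ∈ 𝒮 := hsub t (hrefl_mem u hu)
      have h1 : T s - T u ≤ L * ∑ j, |s j - u j| :=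
        le_trans (le_abs_self _) (hTLip s hs𝒮 u hu𝒮)
      have h2 : T s - T (c - u) ≤ L * ∑ j, |s j - (c - u) j| :=
        le_trans (le_abs_self _) (hTLip s hs𝒮 (c - u) hu'𝒮)
      have h3 : (∑ j, |s j - u j|) + (∑ j, |s j - (c - u) j|)
          ≤ ∑ j, (β t j - α t j) := by
        rw [← Finset.sum_add_distrib]
        apply Finset.sum_le_sum
        intro j _
        rw [hSt t] at hs hu
        have hb : (c - u) j = α t j + β t j - u j := by
          simp [hcdef]
        rw [hb]
        exact abs_refl_bound (hs.1 j) (hs.2 j) (hu.1 j) (hu.2 j)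
      have h4 : L * ((∑ j, |s j - u j|) + (∑ j, |s j - (c - u) j|))
          ≤ L * ∑ j, (β t j - α t j) := mul_le_mul_of_nonneg_left h3 hL
      rw [mul_add] at h4
      linarith
    -- integrate the pointwise bound over the cell
    have hintrefl : IntegrableOn (fun u => T (c - u)) (St t) := by
      apply ContinuousOn.integrableOn_compact (hcellcomp t)
      exact hTcont.comp ((continuous_const.sub continuous_id).continuousOn)
        (fun u hu => hsub t (hrefl_mem u hu))
    have hIrefl : ∫ u in St t, T (c - u) = p t := by
      rw [hp t, hSt t]
      exact reflection_integral (α t) (β t) T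
    have hconstint : ∀ r : ℝ, IntegrableOn (fun _ : Fin n → ℝ => r) (St t) :=
      fun r => integrableOn_const (hcellcomp t).measure_lt_top.ne
    have hlhsint : IntegrableOn (fun u => 2 * T s - T u - T (c - u)) (St t) :=
      ((hconstint (2 * T s)).sub (hTintcell t)).sub hintrefl
    have hmono : ∫ u in St t, (2 * T s - T u - T (c - u))
        ≤ ∫ _u in St t, L * ∑ j, (β t j - α t j) :=
      setIntegral_mono_on hlhsint (hconstint _) (hcellmeas t) hpw
    have hlhs : ∫ u in St t, (2 * T s - T u - T (c - u))
        = 2 * T s * (volume (St t)).toReal - p t - p t := by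
      have e1 : ∫ u in St t, (2 * T s - T u - T (c - u))
          = (∫ u in St t, (2 * T s - T u)) - ∫ u in St t, T (c - u) :=
        integral_sub ((hconstint (2 * T s)).sub (hTintcell t)) hintrefl
      have e2 : ∫ u in St t, (2 * T s - T u)
          = (∫ _u in St t, (2 * T s)) - ∫ u in St t, T u :=
        integral_sub (hconstint (2 * T s)) (hTintcell t)
      rw [e1, e2, setIntegral_const, measureReal_def, hIrefl, ← hp t, smul_eq_mul]
      ring
    have hrhs : (∫ _u in St t, L * ∑ j, (β t j - α t j))
        = L * (∑ j, (β t j - α t j)) * (volume (St t)).toReal := by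
      rw [setIntegral_const, measureReal_def]
      simp [mul_comm]
    rw [hlhs, hrhs] at hmono
    have hbd : L * (∑ j, (β t j - α t j)) * (volume (St t)).toReal ≤ 2 * a' := by
      have hSig : (∑ j, (β t j - α t j)) ≤ n * δbar := by
        calc (∑ j, (β t j - α t j)) ≤ ∑ _j : Fin n, δbar :=
              Finset.sum_le_sum (fun j _ => hδbar₁ t j)
          _ = n * δbar := by simp
      have h5 : L * (∑ j, (β t j - α t j)) * (volume (St t)).toReal
          ≤ L * (n * δbar) * δbar ^ n := by
        apply mul_le_mul
        · exact mul_le_mul_of_nonneg_left hSig hL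
        · exact hlamtle t
        · exact (hlamtpos t).le
        · positivity
      calc L * (∑ j, (β t j - α t j)) * (volume (St t)).toReal
          ≤ L * (n * δbar) * δbar ^ n := h5
        _ = 2 * a' := by rw [ha'def]; ring
    linarith
  -- per-cell integral bound
  have cellbound : ∀ t, (∫ s in St t, T s * Real.log (T s * lamS))
      ≤ p t * Real.log ((p t + a') * lamS / (volume (St t)).toReal) := by
    intro t
    set M : ℝ := (p t + a') / (volume (St t)).toReal with hM
    have hMnn : 0 ≤ M := div_nonneg (by linarith [hpnn t, ha'nn]) (hlamtpos t).le
    have hpw : ∀ s ∈ St t, T s * Real.log (T s * lamS) ≤ T s * Real.log (M * lamS) := by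
      intro s hs
      rcases eq_or_lt_of_le (hTnonneg s (hsub t hs)) with h0 | h0
      · rw [← h0]; simp
      · have hTle : T s ≤ M := by
          rw [hM, le_div_iff₀ (hlamtpos t)]
          exact key t s hs
        apply mul_le_mul_of_nonneg_left _ h0.le
        exact Real.log_le_log (by positivity)
          (mul_le_mul_of_nonneg_right hTle hlamSpos.le)
    have hint1 : IntegrableOn (fun s => T s * Real.log (T s * lamS)) (St t) :=
      hTlogint.mono_set (hsub t)
    have hint2 : IntegrableOn (fun s => T s * Real.log (M * lamS)) (St t) :=
      (hTintcell t).mul_const _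
    calc (∫ s in St t, T s * Real.log (T s * lamS))
        ≤ ∫ s in St t, T s * Real.log (M * lamS) :=
          setIntegral_mono_on hint1 hint2 (hcellmeas t) hpw
      _ = (∫ s in St t, T s) * Real.log (M * lamS) := by rw [integral_mul_const]
      _ = p t * Real.log (M * lamS) := by rw [← hp t]
      _ = p t * Real.log ((p t + a') * lamS / (volume (St t)).toReal) := by
          rw [hM, div_mul_eq_mul_div]
  -- split each cell term
  have step : ∀ t, p t * Real.log ((p t + a') * lamS / (volume (St t)).toReal)
      = p t * Real.log (p t * lamS / (volume (St t)).toReal)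
        + p t * Real.log ((p t + a') / p t) := by
    intro t
    rcases eq_or_lt_of_le (hpnn t) with h0 | h0
    · rw [← h0]; simp
    · have harg : (p t + a') * lamS / (volume (St t)).toReal
          = (p t * lamS / (volume (St t)).toReal) * ((p t + a') / p t) := by
        rw [div_mul_div_comm, div_eq_div_iff (hlamtpos t).ne' (mul_pos (hlamtpos t) h0).ne']
        ring
      rw [harg, Real.log_mul (div_pos (mul_pos h0 hlamSpos) (hlamtpos t)).ne'
        (div_pos (by linarith) h0).ne', mul_add]
  -- Jensen step
  have jensen : (∑ t, p t * Real.log ((p t + a') / p t))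
      ≤ Real.log (1 + m * a') := by
    set x : Fin m → ℝ := fun t => if p t = 0 then 1 else (p t + a') / p t with hx
    have hx1 : ∀ t, (1 : ℝ) ≤ x t := by
      intro t
      rw [hx]
      rcases eq_or_ne (p t) 0 with h | h
      · simp [h]
      · have h0 : 0 < p t := lt_of_le_of_ne (hpnn t) (Ne.symm h)
        simp only [h, if_false]
        rw [le_div_iff₀ h0, one_mul]
        linarith
    have hx0 : ∀ t, x t ∈ Set.Ioi (0 : ℝ) := fun t => lt_of_lt_of_le one_pos (hx1 t)
    have h1 : (∑ t, p t * Real.log ((p t + a') / p t)) = ∑ t, p t • Real.log (x t) := by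
      apply Finset.sum_congr rfl
      intro t _
      rcases eq_or_ne (p t) 0 with h | h
      · simp [h]
      · rw [hx]; simp [h, smul_eq_mul]
    have hjen : (∑ t, p t • Real.log (x t)) ≤ Real.log (∑ t, p t • x t) :=
      strictConcaveOn_log_Ioi.concaveOn.le_map_sum (fun t _ => hpnn t) hsump
        (fun t _ => hx0 t)
    have hsx1 : (1 : ℝ) ≤ ∑ t, p t • x t := by
      calc (1 : ℝ) = ∑ t, p t := hsump.symm
        _ ≤ ∑ t, p t • x t := by
            apply Finset.sum_le_sum
            intro t _
            rw [smul_eq_mul]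
            nlinarith [hpnn t, hx1 t]
    have hsx2 : (∑ t, p t • x t) ≤ 1 + m * a' := by
      have hterm : ∀ t, p t • x t ≤ p t + a' := by
        intro t
        rw [smul_eq_mul, hx]
        rcases eq_or_ne (p t) 0 with h | h
        · simp [h, ha'nn]
        · simp only [h, if_false]
          rw [mul_div_cancel₀ _ h]
      calc (∑ t, p t • x t) ≤ ∑ t, (p t + a') := Finset.sum_le_sum fun t _ => hterm t
        _ = 1 + m * a' := by
            rw [Finset.sum_add_distrib, hsump, Finset.sum_const]
            simp [nsmul_eq_mul]
    rw [h1]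
    exact le_trans hjen (Real.log_le_log (by linarith) hsx2)
  -- put everything together
  calc (∫ s in 𝒮, T s * Real.log (T s * lamS))
      = ∑ t, ∫ s in St t, T s * Real.log (T s * lamS) := hsplit _ hTlogint
    _ ≤ ∑ t, p t * Real.log ((p t + a') * lamS / (volume (St t)).toReal) :=
        Finset.sum_le_sum fun t _ => cellbound t
    _ = (∑ t, p t * Real.log (p t * lamS / (volume (St t)).toReal))
        + ∑ t, p t * Real.log ((p t + a') / p t) := by
        rw [← Finset.sum_add_distrib]
        exact Finset.sum_congr rfl fun t _ => step t
    _ ≤ (∑ t, p t * Real.log (p t * lamS / (volume (St t)).toReal))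
        + Real.log (1 + m * a') := add_le_add le_rfl jensen
    _ = (∑ t, p t * Real.log (p t * lamS / (volume (St t)).toReal))
        + Real.log (1 + (n : ℝ) / 2 * (m : ℝ) * L * δbar ^ (n + 1)) := by
        have h : 1 + (m : ℝ) * a' = 1 + (n : ℝ) / 2 * (m : ℝ) * L * δbar ^ (n + 1) := by
          rw [ha'def]; ring
        rw [h]
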